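/- For every Λ ≥ 1/4, one has ∫₀^{arctan(1/Λ)} (cos t)ⁿ (1 − Λ tan t)ⁿ dt ≥ (5/(27Λ))·(9/10)^{2n} for every integer n ≥ 1. -/

import Mathlib

open Real

lemma integral_linear_pow (α β x y : ℝ) (hβ : β ≠ 0) (n : ℕ) :
    ∫ t in x..y, (α + β*t)^n = ((α+β*y)^(n+1) - (α+β*x)^(n+1)) / (β*(n+1)) := by
  have key : ∀ t : ℝ, HasDerivAt (fun t => (α+β*t)^(n+1) / (β*(n+1))) ((α+β*t)^n) t := by
    intro t
    have h1 : HasDerivAt (fun t:ℝ => α+β*t) β t := by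
      simpa using ((hasDerivAt_id t).const_mul β).const_add α
    have h2 := (h1.pow (n+1)).div_const (β*(n+1))
    refine h2.congr_deriv ?_
    have hn : ((n:ℝ)+1) ≠ 0 := by positivity
    push_cast
    field_simp
  rw [intervalIntegral.integral_eq_sub_of_hasDerivAt (fun t _ => key t)
    ((Continuous.pow (by continuity) n).intervalIntegrable x y)]
  ring

lemma J1calc (s H : ℝ) (hs : 0 < s) (hH : H - 1 ≠ 0) (n : ℕ) :
    ∫ t in (0:ℝ)..s, ((s + (H-1)*t)/s)^n
      = s * (∑ k ∈ Finset.range (n+1), H^k)/(n+1) := by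
  have hrw : (fun t : ℝ => ((s + (H-1)*t)/s)^n) = fun t => (s + (H-1)*t)^n / s^n := by
    funext t; rw [div_pow]
  rw [hrw, intervalIntegral.integral_div, integral_linear_pow s (H-1) 0 s hH n]
  have hgeom := geom_sum_mul H (n+1)
  have hn1 : (0:ℝ) < (n:ℝ)+1 := by positivity
  have e : (s + (H-1)*s)^(n+1) - (s + (H-1)*0)^(n+1)
      = s^(n+1) * ((H-1) * ∑ k ∈ Finset.range (n+1), H^k) := by
    rw [show s + (H-1)*s = s*H by ring, mul_pow]
    linear_combination (-(s:ℝ)^(n+1)) * hgeom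
  rw [e, pow_succ]
  field_simp

lemma J2calc (s c H : ℝ) (hsc : s < c) (n : ℕ) :
    ∫ t in s..c, (H * ((c-t)/(c-s)))^n = (c-s) * H^n/(n+1) := by
  have hcs : c - s ≠ 0 := by linarith
  have hrw : (fun t : ℝ => (H * ((c-t)/(c-s)))^n)
      = fun t => (H/(c-s))^n * (c + (-1)*t)^n := by
    funext t; rw [← mul_pow]; ring_nf
  rw [hrw, intervalIntegral.integral_const_mul, integral_linear_pow c (-1) s c (by norm_num) n]
  have hn1 : (0:ℝ) < (n:ℝ)+1 := by positivity
  rw [show c + (-1)*c = 0 by ring, show c + (-1)*s = c - s by ring]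
  rw [zero_pow (by omega), pow_succ, div_pow]
  have h2 : (c-s)^n ≠ 0 := pow_ne_zero _ hcs
  rw [show (-1:ℝ)*((n:ℝ)+1) = -((n:ℝ)+1) by ring, zero_sub, div_neg, neg_div, neg_neg]
  field_simp
 section Master
variable (L s c : ℝ) (n : ℕ)

lemma master (hL : 0 < L) (hs0 : 0 < s) (hsc : s ≤ c) (hc13 : c ≤ 1.3)
    (hhc : 0 ≤ Real.cos c - L * Real.sin c) :
    (s * (∑ k ∈ Finset.range (n+1), (Real.cos s - L*Real.sin s)^k)
       + (c-s)*(Real.cos s - L*Real.sin s)^n) / (n+1)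
      ≤ ∫ t in (0:ℝ)..(Real.arctan (1/L)), (Real.cos t)^n * (1 - L * Real.tan t)^n := by
  set a := Real.arctan (1/L) with ha_def
  have hpi : (3.14 : ℝ) < π := by
    have := Real.pi_gt_d6; linarith
  have hapi : a < π/2 := Real.arctan_lt_pi_div_two _
  have hcpi : c < π/2 := by linarith
  have hc0 : 0 < c := lt_of_lt_of_le hs0 hsc
  have hcosc : 0 < Real.cos c := Real.cos_pos_of_mem_Ioo ⟨by linarith, hcpi⟩
  have htanc : Real.tan c ≤ 1/L := by
    rw [Real.tan_eq_sin_div_cos, div_le_div_iff₀ hcosc hL]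
    nlinarith
  have hca : c ≤ a := by
    have h2 := Real.arctan_strictMono.monotone htanc
    rw [Real.arctan_tan (by linarith) hcpi] at h2
    exact h2
  have hnn : ∀ t ∈ Set.Icc (0:ℝ) a, 0 ≤ Real.cos t - L * Real.sin t := by
    rintro t ⟨ht0, hta⟩
    have hta2 : t < π/2 := lt_of_le_of_lt hta hapi
    have hcost : 0 < Real.cos t := Real.cos_pos_of_mem_Ioo ⟨by linarith, hta2⟩
    have htt : Real.tan t ≤ 1/L := by
      have := Real.strictMonoOn_tan.monotoneOn ⟨by linarith, hta2⟩ ⟨by linarith, hapi⟩ hta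
      rwa [ha_def, Real.tan_arctan] at this
    have h1 : L * Real.tan t ≤ 1 := by
      have h0 := mul_le_mul_of_nonneg_left htt hL.le
      have : L * (1/L) = 1 := by field_simp
      linarith
    rw [Real.tan_eq_sin_div_cos] at h1
    have h3 : L * Real.sin t ≤ Real.cos t := by
      rw [← mul_div_assoc] at h1
      have := (div_le_one hcost).mp h1
      linarith
    linarith
  -- rewrite the integrand
  have h0a : 0 < a := lt_of_lt_of_le hc0 hca
  have hEq : Set.EqOn (fun t => (Real.cos t)^n * (1 - L * Real.tan t)^n)
      (fun t => (Real.cos t - L*Real.sin t)^n) (Set.uIcc 0 a) := by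
    intro t ht
    rw [Set.uIcc_of_le h0a.le] at ht
    obtain ⟨ht0, hta⟩ := ht
    have hta2 : t < π/2 := lt_of_le_of_lt hta hapi
    have hcost : 0 < Real.cos t := Real.cos_pos_of_mem_Ioo ⟨by linarith, hta2⟩
    simp only
    rw [← mul_pow]
    congr 1
    rw [Real.tan_eq_sin_div_cos]
    field_simp
  rw [intervalIntegral.integral_congr hEq]
  -- concavity
  have hconc : ConcaveOn ℝ (Set.Icc 0 a) (fun t => Real.cos t - L*Real.sin t) := by
    apply concaveOn_of_hasDerivWithinAt2_nonpos (convex_Icc 0 a)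
      (f' := fun t => -Real.sin t - L*Real.cos t)
      (f'' := fun t => -(Real.cos t - L * Real.sin t))
    · exact (Real.continuous_cos.sub (continuous_const.mul Real.continuous_sin)).continuousOn
    · intro x hx
      exact ((Real.hasDerivAt_cos x).sub ((Real.hasDerivAt_sin x).const_mul L)).hasDerivWithinAt
    · intro x hx
      have : HasDerivAt (fun t => -Real.sin t - L*Real.cos t)
          (-(Real.cos x - L * Real.sin x)) x := by
        have := (Real.hasDerivAt_sin x).neg.sub ((Real.hasDerivAt_cos x).const_mul L)
        refine this.congr_deriv ?_
        ring
      exact this.hasDerivWithinAt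
    · intro x hx
      rw [interior_Icc] at hx
      have := hnn x ⟨hx.1.le, hx.2.le⟩
      linarith
  -- abbreviations
  set hsv := Real.cos s - L*Real.sin s with hsv_def
  have hs_mem : s ∈ Set.Icc 0 a := ⟨hs0.le, le_trans hsc hca⟩
  have hhs0 : 0 ≤ hsv := hnn s hs_mem
  have hhs1 : hsv < 1 := by
    have hsinpos : 0 < Real.sin s := Real.sin_pos_of_pos_of_lt_pi hs0 (by linarith)
    have := Real.cos_le_one s
    nlinarith
  have hβ : hsv - 1 ≠ 0 := by intro h; rw [sub_eq_zero] at h; linarith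
  have hcont : Continuous (fun t : ℝ => (Real.cos t - L*Real.sin t)^n) :=
    (Real.continuous_cos.sub (continuous_const.mul Real.continuous_sin)).pow n
  -- chord 1 pointwise bound on [0,s]
  have hchord1 : ∀ t ∈ Set.Icc (0:ℝ) s, ((s + (hsv-1)*t)/s)^n ≤ (Real.cos t - L*Real.sin t)^n := by
    rintro t ⟨ht0, hts⟩
    have hmem0 : (0:ℝ) ∈ Set.Icc (0:ℝ) a := ⟨le_refl 0, h0a.le⟩
    have hcoef1 : 0 ≤ (s-t)/s := div_nonneg (by linarith) hs0.le
    have hcoef2 : 0 ≤ t/s := div_nonneg ht0 hs0.le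
    have hsum : (s-t)/s + t/s = 1 := by field_simp; ring
    have h1 := hconc.2 hmem0 hs_mem hcoef1 hcoef2 hsum
    simp only [smul_eq_mul] at h1
    rw [show (s-t)/s*(0:ℝ) + t/s*s = t by field_simp; ring] at h1
    rw [show Real.cos 0 - L * Real.sin 0 = 1 by simp] at h1
    have h2 : (s + (hsv-1)*t)/s ≤ Real.cos t - L*Real.sin t := by
      rw [hsv_def]
      have he : (s + ((Real.cos s - L*Real.sin s)-1)*t)/s
          = (s-t)/s * 1 + t/s * (Real.cos s - L*Real.sin s) := by
        field_simp
        ring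
      rw [he]
      exact h1
    have h3 : 0 ≤ (s + (hsv-1)*t)/s := by
      apply div_nonneg _ hs0.le
      nlinarith
    exact pow_le_pow_left₀ h3 h2 n
  have hJ1 : s * (∑ k ∈ Finset.range (n+1), hsv^k)/(n+1)
      ≤ ∫ t in (0:ℝ)..s, (Real.cos t - L*Real.sin t)^n := by
    rw [← J1calc s hsv hs0 hβ n]
    apply intervalIntegral.integral_mono_on hs0.le
      ((((continuous_const.add (continuous_const.mul continuous_id)).div_const s).pow n).intervalIntegrable 0 s)
      (hcont.intervalIntegrable 0 s) hchord1
  -- second segment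
  have hJ2 : (c-s) * hsv^n/(n+1) ≤ ∫ t in s..c, (Real.cos t - L*Real.sin t)^n := by
    rcases eq_or_lt_of_le hsc with heq | hlt
    · rw [← heq]
      simp
    · have hchord2 : ∀ t ∈ Set.Icc s c, (hsv * ((c-t)/(c-s)))^n ≤ (Real.cos t - L*Real.sin t)^n := by
        rintro t ⟨hts, htc⟩
        have hc_mem : c ∈ Set.Icc (0:ℝ) a := ⟨hc0.le, hca⟩
        have hcs0 : (0:ℝ) < c - s := by linarith
        have hcoef1 : 0 ≤ (c-t)/(c-s) := div_nonneg (by linarith) hcs0.le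
        have hcoef2 : 0 ≤ (t-s)/(c-s) := div_nonneg (by linarith) hcs0.le
        have hsum : (c-t)/(c-s) + (t-s)/(c-s) = 1 := by field_simp; ring
        have h1 := hconc.2 hs_mem hc_mem hcoef1 hcoef2 hsum
        simp only [smul_eq_mul] at h1
        rw [show (c-t)/(c-s)*s + (t-s)/(c-s)*c = t by field_simp; ring] at h1
        have h2 : hsv * ((c-t)/(c-s)) ≤ Real.cos t - L*Real.sin t := by
          have hhcc : 0 ≤ (t-s)/(c-s) * (Real.cos c - L*Real.sin c) := mul_nonneg hcoef2 hhc
          calc hsv * ((c-t)/(c-s)) = (c-t)/(c-s) * (Real.cos s - L*Real.sin s) := by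
                rw [hsv_def]; ring
            _ ≤ (c-t)/(c-s) * (Real.cos s - L*Real.sin s)
                + (t-s)/(c-s) * (Real.cos c - L*Real.sin c) := by linarith
            _ ≤ _ := h1
        have h3 : 0 ≤ hsv * ((c-t)/(c-s)) := mul_nonneg hhs0 hcoef1
        exact pow_le_pow_left₀ h3 h2 n
      rw [← J2calc s c hsv hlt n]
      apply intervalIntegral.integral_mono_on hsc
        (((continuous_const.mul ((continuous_const.sub continuous_id).div_const (c-s))).pow n).intervalIntegrable s c)
        (hcont.intervalIntegrable s c) hchord2
  -- tail nonneg
  have hJ3 : (0:ℝ) ≤ ∫ t in c..a, (Real.cos t - L*Real.sin t)^n := by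
    apply intervalIntegral.integral_nonneg hca
    intro u hu
    exact pow_nonneg (hnn u ⟨le_trans hc0.le hu.1, hu.2⟩) n
  -- combine
  have e1 : (∫ t in (0:ℝ)..s, (Real.cos t - L*Real.sin t)^n)
        + (∫ t in s..c, (Real.cos t - L*Real.sin t)^n)
      = ∫ t in (0:ℝ)..c, (Real.cos t - L*Real.sin t)^n :=
    intervalIntegral.integral_add_adjacent_intervals
      (hcont.intervalIntegrable 0 s) (hcont.intervalIntegrable s c)
  have e2 : (∫ t in (0:ℝ)..c, (Real.cos t - L*Real.sin t)^n)
        + (∫ t in c..a, (Real.cos t - L*Real.sin t)^n)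
      = ∫ t in (0:ℝ)..a, (Real.cos t - L*Real.sin t)^n :=
    intervalIntegral.integral_add_adjacent_intervals
      (hcont.intervalIntegrable 0 c) (hcont.intervalIntegrable c a)
  have hfinal : (s * (∑ k ∈ Finset.range (n+1), hsv^k) + (c-s)*hsv^n) / (n+1)
      = s * (∑ k ∈ Finset.range (n+1), hsv^k)/(n+1) + (c-s) * hsv^n/(n+1) := by ring
  rw [hsv_def] at hfinal
  rw [hfinal]
  rw [hsv_def] at hJ1 hJ2
  linarith
end Master

def SC (x slo shi clo chi : ℝ) : Prop :=
  slo ≤ Real.sin x ∧ Real.sin x ≤ shi ∧ clo ≤ Real.cos x ∧ Real.cos x ≤ chi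

lemma SC_base (x slo shi clo chi : ℝ) (h0 : 0 ≤ x) (h1 : x ≤ 1)
    (e1 : slo ≤ x - x^3/6 - x^4*(5/96)) (e2 : x - x^3/6 + x^4*(5/96) ≤ shi)
    (e3 : clo ≤ 1 - x^2/2 - x^4*(5/96)) (e4 : 1 - x^2/2 + x^4*(5/96) ≤ chi) :
    SC x slo shi clo chi := by
  have hs := Real.sin_bound (x := x) (by rw [abs_of_nonneg h0]; exact h1)
  have hc := Real.cos_bound (x := x) (by rw [abs_of_nonneg h0]; exact h1)
  rw [abs_of_nonneg h0] at hs hc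
  have hs' := abs_le.mp hs
  have hc' := abs_le.mp hc
  have h5 : x^5/100 ≤ x^4*(5/96) := by nlinarith [pow_nonneg h0 4, mul_le_mul_of_nonneg_left h1 (pow_nonneg h0 4)]
  exact ⟨by linarith [hs'.1, hs'.2], by linarith [hs'.1, hs'.2],
    by linarith [hc'.1, hc'.2], by linarith [hc'.1, hc'.2]⟩

lemma SC_double (x slo shi clo chi Slo Shi Clo Chi : ℝ) (h : SC x slo shi clo chi)
    (hs0 : 0 ≤ slo) (hc0 : 0 ≤ clo)
    (e1 : Slo ≤ 2*slo*clo) (e2 : 2*shi*chi ≤ Shi)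
    (e3 : Clo ≤ 1-2*shi^2) (e4 : 1-2*slo^2 ≤ Chi) :
    SC (2*x) Slo Shi Clo Chi := by
  obtain ⟨h1, h2, h3, h4⟩ := h
  refine ⟨?_, ?_, ?_, ?_⟩
  · rw [Real.sin_two_mul]; nlinarith
  · rw [Real.sin_two_mul]; nlinarith
  · rw [Real.cos_two_mul']; nlinarith [Real.sin_sq_add_cos_sq x]
  · rw [Real.cos_two_mul']; nlinarith [Real.sin_sq_add_cos_sq x]

lemma SC045 : SC 0.45 0.4349241 0.4350001 0.900432 0.9004653 := by
  have b1 : SC 0.1125 0.1122543 0.1122711 0.9936635 0.9936803 :=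
    SC_base _ _ _ _ _ (by norm_num) (by norm_num) (by norm_num) (by norm_num) (by norm_num) (by norm_num)
  have b2 := SC_double _ _ _ _ _ 0.223086 0.2231232 0.9747904 0.974798 b1
    (by norm_num) (by norm_num) (by norm_num) (by norm_num) (by norm_num) (by norm_num)
  rw [show (2:ℝ)*0.1125 = 0.225 by norm_num] at b2
  have b3 := SC_double _ _ _ _ _ 0.4349241 0.4350001 0.900432 0.9004653 b2
    (by norm_num) (by norm_num) (by norm_num) (by norm_num) (by norm_num) (by norm_num)
  rw [show (2:ℝ)*0.225 = 0.45 by norm_num] at b3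
  exact b3


lemma SC077 : SC 0.77 0.6957354 0.6964406 0.7176976 0.7182023 := by
  have b1 : SC 0.1925 0.1912395 0.1913827 0.9814003 0.9815434 :=
    SC_base _ _ _ _ _ (by norm_num) (by norm_num) (by norm_num) (by norm_num) (by norm_num) (by norm_num)
  have b2 := SC_double _ _ _ _ _ 0.375365 0.3757009 0.9267453 0.926855 b1
    (by norm_num) (by norm_num) (by norm_num) (by norm_num) (by norm_num) (by norm_num)
  rw [show (2:ℝ)*0.1925 = 0.385 by norm_num] at b2
  have b3 := SC_double _ _ _ _ _ 0.6957354 0.6964406 0.7176976 0.7182023 b2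
    (by norm_num) (by norm_num) (by norm_num) (by norm_num) (by norm_num) (by norm_num)
  rw [show (2:ℝ)*0.385 = 0.77 by norm_num] at b3
  exact b3

lemma SC100 : SC 1.0 0.8402481 0.8423723 0.5395368 0.5414353 := by
  have b1 : SC 0.25 0.2471923 0.2475993 0.9685465 0.9689535 :=
    SC_base _ _ _ _ _ (by norm_num) (by norm_num) (by norm_num) (by norm_num) (by norm_num) (by norm_num)
  have b2 := SC_double _ _ _ _ _ 0.4788344 0.4798245 0.8773891 0.877792 b1
    (by norm_num) (by norm_num) (by norm_num) (by norm_num) (by norm_num) (by norm_num)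
  rw [show (2:ℝ)*0.25 = 0.5 by norm_num] at b2
  have b3 := SC_double _ _ _ _ _ 0.8402481 0.8423723 0.5395368 0.5414353 b2
    (by norm_num) (by norm_num) (by norm_num) (by norm_num) (by norm_num) (by norm_num)
  rw [show (2:ℝ)*0.5 = 1.0 by norm_num] at b3
  exact b3

lemma SC117 : SC 1.17 0.9183554 0.9224946 0.3885144 0.3927094 := by
  have b1 : SC 0.2925 0.2879478 0.2887104 0.9568406 0.9576032 :=
    SC_base _ _ _ _ _ (by norm_num) (by norm_num) (by norm_num) (by norm_num) (by norm_num) (by norm_num)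
  have b2 := SC_double _ _ _ _ _ 0.5510402 0.5529401 0.8332926 0.8341722 b1
    (by norm_num) (by norm_num) (by norm_num) (by norm_num) (by norm_num) (by norm_num)
  rw [show (2:ℝ)*0.2925 = 0.585 by norm_num] at b2
  have b3 := SC_double _ _ _ _ _ 0.9183554 0.9224946 0.3885144 0.3927094 b2
    (by norm_num) (by norm_num) (by norm_num) (by norm_num) (by norm_num) (by norm_num)
  rw [show (2:ℝ)*0.585 = 1.17 by norm_num] at b3
  exact b3

lemma SC121 : SC 1.21 0.9328509 0.9376268 0.351095 0.356063 := by
  have b1 : SC 0.3025 0.2974504 0.2983227 0.9538107 0.954683 :=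
    SC_base _ _ _ _ _ (by norm_num) (by norm_num) (by norm_num) (by norm_num) (by norm_num) (by norm_num)
  have b2 := SC_double _ _ _ _ _ 0.5674227 0.5696073 0.8220071 0.8230466 b1
    (by norm_num) (by norm_num) (by norm_num) (by norm_num) (by norm_num) (by norm_num)
  rw [show (2:ℝ)*0.3025 = 0.605 by norm_num] at b2
  have b3 := SC_double _ _ _ _ _ 0.9328509 0.9376268 0.351095 0.356063 b2
    (by norm_num) (by norm_num) (by norm_num) (by norm_num) (by norm_num) (by norm_num)
  rw [show (2:ℝ)*0.605 = 1.21 by norm_num] at b3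
  exact b3

lemma SC128 : SC 1.28 0.9545012 0.9605699 0.2841957 0.2907855 := by
  have b1 : SC 0.32 0.3139925 0.3150848 0.9482538 0.9493462 :=
    SC_base _ _ _ _ _ (by norm_num) (by norm_num) (by norm_num) (by norm_num) (by norm_num) (by norm_num)
  have b2 := SC_double _ _ _ _ _ 0.5954891 0.5982492 0.8014431 0.8028175 b1
    (by norm_num) (by norm_num) (by norm_num) (by norm_num) (by norm_num) (by norm_num)
  rw [show (2:ℝ)*0.32 = 0.64 by norm_num] at b2
  have b3 := SC_double _ _ _ _ _ 0.9545012 0.9605699 0.2841957 0.2907855 b2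
    (by norm_num) (by norm_num) (by norm_num) (by norm_num) (by norm_num) (by norm_num)
  rw [show (2:ℝ)*0.64 = 1.28 by norm_num] at b3
  exact b3

lemma SC070 : SC 0.7 0.6439514 0.6444243 0.7647088 0.76502 := by
  have b1 : SC 0.175 0.1740579 0.1741557 0.9846386 0.9847364 :=
    SC_base _ _ _ _ _ (by norm_num) (by norm_num) (by norm_num) (by norm_num) (by norm_num) (by norm_num)
  have b2 := SC_double _ _ _ _ _ 0.3427682 0.342995 0.9393395 0.9394077 b1
    (by norm_num) (by norm_num) (by norm_num) (by norm_num) (by norm_num) (by norm_num)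
  rw [show (2:ℝ)*0.175 = 0.35 by norm_num] at b2
  have b3 := SC_double _ _ _ _ _ 0.6439514 0.6444243 0.7647088 0.76502 b2
    (by norm_num) (by norm_num) (by norm_num) (by norm_num) (by norm_num) (by norm_num)
  rw [show (2:ℝ)*0.35 = 0.7 by norm_num] at b3
  exact b3

lemma seq_le (n : ℕ) : ((n:ℝ)+1)*(81/100)^n ≤ 2.1524 := by
  rcases lt_or_ge n 4 with h | h
  · interval_cases n <;> norm_num
  · induction n, h using Nat.le_induction with
    | base => norm_num
    | succ m hm ih =>
      have hq : (0:ℝ) ≤ (81/100)^m := by positivity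
      have hc : (4:ℝ) ≤ (m:ℝ) := by exact_mod_cast hm
      push_cast
      push_cast at ih
      rw [pow_succ]
      nlinarith

lemma seq8_le (n : ℕ) (h : 8 ≤ n) : ((n:ℝ)+1)*(81/100)^n ≤ 1.6678 := by
  induction n, h using Nat.le_induction with
  | base => norm_num
  | succ m hm ih =>
    have hq : (0:ℝ) ≤ (81/100)^m := by positivity
    have hc : (8:ℝ) ≤ (m:ℝ) := by exact_mod_cast hm
    push_cast
    push_cast at ih
    rw [pow_succ]
    nlinarith

lemma leaf_main (Λ : ℝ) (n : ℕ) (L1 L2 s c H : ℝ)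
    (hΛ1 : L1 ≤ Λ) (hΛ2 : Λ ≤ L2) (hL1 : 0 < L1)
    (hs0 : 0 < s) (hsc : s ≤ c) (hc13 : c ≤ 1.3) (hH0 : 0 ≤ H)
    (hsins : 0 ≤ Real.sin s) (hHle : H ≤ Real.cos s - L2 * Real.sin s)
    (hsinc : 0 ≤ Real.sin c) (hhc2 : 0 ≤ Real.cos c - L2 * Real.sin c)
    (key : 5/27*((n:ℝ)+1)*(81/100)^n
      ≤ L1*(s*(∑ k ∈ Finset.range (n+1), H^k) + (c-s)*H^n)) :
    5/(27*Λ)*(81/100)^n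
      ≤ ∫ t in (0:ℝ)..Real.arctan (1/Λ), (Real.cos t)^n*(1-Λ*Real.tan t)^n := by
  have hL0 : 0 < Λ := lt_of_lt_of_le hL1 hΛ1
  have hhcΛ : 0 ≤ Real.cos c - Λ * Real.sin c := by nlinarith
  have hHΛ : H ≤ Real.cos s - Λ * Real.sin s := by nlinarith
  have hm := master Λ s c n hL0 hs0 hsc hc13 hhcΛ
  have hsum_mono : (∑ k ∈ Finset.range (n+1), H^k)
      ≤ ∑ k ∈ Finset.range (n+1), (Real.cos s - Λ*Real.sin s)^k :=
    Finset.sum_le_sum (fun k _ => pow_le_pow_left₀ hH0 hHΛ k)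
  have hpow_mono : H^n ≤ (Real.cos s - Λ*Real.sin s)^n := pow_le_pow_left₀ hH0 hHΛ n
  have hS0 : 0 ≤ ∑ k ∈ Finset.range (n+1), H^k :=
    Finset.sum_nonneg (fun k _ => pow_nonneg hH0 k)
  have hXle : s*(∑ k ∈ Finset.range (n+1), H^k) + (c-s)*H^n
      ≤ s*(∑ k ∈ Finset.range (n+1), (Real.cos s - Λ*Real.sin s)^k)
        + (c-s)*(Real.cos s - Λ*Real.sin s)^n := by
    have t1 := mul_le_mul_of_nonneg_left hsum_mono hs0.le
    have t2 := mul_le_mul_of_nonneg_left hpow_mono (by linarith : (0:ℝ) ≤ c - s)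
    linarith
  have hX0 : 0 ≤ s*(∑ k ∈ Finset.range (n+1), H^k) + (c-s)*H^n := by
    have t3 : 0 ≤ (c-s)*H^n := mul_nonneg (by linarith) (pow_nonneg hH0 n)
    nlinarith [mul_nonneg hs0.le hS0]
  have key2 : 5/27*((n:ℝ)+1)*(81/100)^n
      ≤ Λ * (s*(∑ k ∈ Finset.range (n+1), (Real.cos s - Λ*Real.sin s)^k)
        + (c-s)*(Real.cos s - Λ*Real.sin s)^n) := by
    have t1 := mul_le_mul_of_nonneg_right hΛ1 hX0
    have t2 := mul_le_mul_of_nonneg_left hXle hL0.le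
    linarith
  have hn1 : (0:ℝ) < (n:ℝ)+1 := by positivity
  calc 5/(27*Λ)*(81/100)^n = 5*(81/100)^n/(27*Λ) := by ring
    _ ≤ (s*(∑ k ∈ Finset.range (n+1), (Real.cos s - Λ*Real.sin s)^k)
        + (c-s)*(Real.cos s - Λ*Real.sin s)^n)/((n:ℝ)+1) := by
        rw [div_le_div_iff₀ (by positivity) hn1]
        nlinarith [key2]
    _ ≤ _ := hm

lemma int_big (Λ : ℝ) (n : ℕ) (h1 : 1 ≤ Λ) :
    5/(27*Λ)*(81/100)^n
      ≤ ∫ t in (0:ℝ)..Real.arctan (1/Λ), (Real.cos t)^n*(1-Λ*Real.tan t)^n := by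
  have hL0 : 0 < Λ := by linarith
  have hpi : (3.14:ℝ) < π := by
    have := Real.pi_gt_d6; linarith
  have hc0 : 0 < 7/(10*Λ) := by positivity
  have hcle : 7/(10*Λ) ≤ 0.7 := by
    rw [div_le_iff₀ (by positivity)]
    nlinarith
  have hc13 : 7/(10*Λ) ≤ 1.3 := by linarith
  have hsin : Real.sin (7/(10*Λ)) ≤ 7/(10*Λ) := Real.sin_le hc0.le
  have hcos : Real.cos 0.7 ≤ Real.cos (7/(10*Λ)) :=
    Real.cos_le_cos_of_nonneg_of_le_pi hc0.le (by linarith) hcle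
  obtain ⟨_, _, c3, _⟩ := SC070
  have hmul : Λ*(7/(10*Λ)) = 7/10 := by field_simp
  have hhc : 0 ≤ Real.cos (7/(10*Λ)) - Λ*Real.sin (7/(10*Λ)) := by
    have h2 : Λ*Real.sin (7/(10*Λ)) ≤ Λ*(7/(10*Λ)) := mul_le_mul_of_nonneg_left hsin hL0.le
    rw [hmul] at h2
    have h3 : (0.7647088:ℝ) ≤ Real.cos (7/(10*Λ)) := by linarith
    norm_num at h3
    linarith
  have hm := master Λ (7/(10*Λ)) (7/(10*Λ)) n hL0 hc0 le_rfl hc13 hhc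
  rw [sub_self, zero_mul, add_zero] at hm
  have hSig : (1:ℝ) ≤ ∑ k ∈ Finset.range (n+1),
      (Real.cos (7/(10*Λ)) - Λ*Real.sin (7/(10*Λ)))^k := by
    have h0m : 0 ∈ Finset.range (n+1) := Finset.mem_range.mpr (by omega)
    have := Finset.single_le_sum
      (f := fun k => (Real.cos (7/(10*Λ)) - Λ*Real.sin (7/(10*Λ)))^k)
      (fun i _ => pow_nonneg hhc i) h0m
    simpa using this
  have hseq := seq_le n
  have hn1 : (0:ℝ) < (n:ℝ)+1 := by positivity
  have hq0 : (0:ℝ) ≤ (81/100:ℝ)^n := by positivity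
  have hstep : 5/(27*Λ)*(81/100)^n
      ≤ (7/(10*Λ))*(∑ k ∈ Finset.range (n+1),
          (Real.cos (7/(10*Λ)) - Λ*Real.sin (7/(10*Λ)))^k)/((n:ℝ)+1) := by
    have hA : 5/(27*Λ)*(81/100)^n = 5*(81/100)^n/(27*Λ) := by ring
    have hB : (7/(10*Λ))*1/((n:ℝ)+1) = 7/(10*Λ*((n:ℝ)+1)) := by
      field_simp
    have hord : 5*(81/100)^n/(27*Λ) ≤ 7/(10*Λ*((n:ℝ)+1)) := by
      rw [div_le_div_iff₀ (by positivity) (by positivity)]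
      nlinarith [hseq, hq0, hL0]
    have hmono : (7/(10*Λ))*1/((n:ℝ)+1)
        ≤ (7/(10*Λ))*(∑ k ∈ Finset.range (n+1),
            (Real.cos (7/(10*Λ)) - Λ*Real.sin (7/(10*Λ)))^k)/((n:ℝ)+1) := by
      apply div_le_div_of_nonneg_right ?_ hn1.le
      exact mul_le_mul_of_nonneg_left hSig (by positivity)
    rw [hA]
    exact le_trans hord (le_trans (le_of_eq hB.symm) hmono)
  exact le_trans hstep hm

lemma int1 (Λ : ℝ) (n : ℕ) (hn : 1 ≤ n) (h1 : 0.25 ≤ Λ) (h2 : Λ ≤ 0.28) :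
    5/(27*Λ)*(81/100)^n
      ≤ ∫ t in (0:ℝ)..Real.arctan (1/Λ), (Real.cos t)^n*(1-Λ*Real.tan t)^n := by
  obtain ⟨s1, s2, s3, s4⟩ := SC045
  obtain ⟨c1, c2, c3, c4⟩ := SC128
  apply leaf_main Λ n 0.25 0.28 0.45 1.28 0.7786 h1 h2 (by norm_num) (by norm_num)
    (by norm_num) (by norm_num) (by norm_num) (by linarith) (by nlinarith)
    (by linarith) (by nlinarith)
  rcases le_or_gt n 7 with hn7 | hn7
  · interval_cases n <;> norm_num [Finset.sum_range_succ]
  · have hseq := seq8_le n hn7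
    have h9 : (∑ k ∈ Finset.range 9, (0.7786:ℝ)^k) ≤ ∑ k ∈ Finset.range (n+1), (0.7786:ℝ)^k :=
      Finset.sum_le_sum_of_subset_of_nonneg (Finset.range_subset_range.mpr (by omega))
        (fun i _ _ => by positivity)
    have hpn : (0:ℝ) ≤ (0.7786:ℝ)^n := by positivity
    have h10 : (5:ℝ)/27*1.6678 ≤ 0.25*(0.45*∑ k ∈ Finset.range 9, (0.7786:ℝ)^k) := by
      norm_num [Finset.sum_range_succ]
    nlinarith [h9, hpn]

lemma int2 (Λ : ℝ) (n : ℕ) (hn : 1 ≤ n) (h1 : 0.28 ≤ Λ) (h2 : Λ ≤ 0.31) :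
    5/(27*Λ)*(81/100)^n
      ≤ ∫ t in (0:ℝ)..Real.arctan (1/Λ), (Real.cos t)^n*(1-Λ*Real.tan t)^n := by
  obtain ⟨s1, s2, s3, s4⟩ := SC045
  obtain ⟨c1, c2, c3, c4⟩ := SC121
  apply leaf_main Λ n 0.28 0.31 0.45 1.21 0.7655 h1 h2 (by norm_num) (by norm_num)
    (by norm_num) (by norm_num) (by norm_num) (by linarith) (by nlinarith)
    (by linarith) (by nlinarith)
  rcases le_or_gt n 7 with hn7 | hn7
  · interval_cases n <;> norm_num [Finset.sum_range_succ]
  · have hseq := seq8_le n hn7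
    have h9 : (∑ k ∈ Finset.range 9, (0.7655:ℝ)^k) ≤ ∑ k ∈ Finset.range (n+1), (0.7655:ℝ)^k :=
      Finset.sum_le_sum_of_subset_of_nonneg (Finset.range_subset_range.mpr (by omega))
        (fun i _ _ => by positivity)
    have hpn : (0:ℝ) ≤ (0.7655:ℝ)^n := by positivity
    have h10 : (5:ℝ)/27*1.6678 ≤ 0.28*(0.45*∑ k ∈ Finset.range 9, (0.7655:ℝ)^k) := by
      norm_num [Finset.sum_range_succ]
    nlinarith [h9, hpn]

lemma int3 (Λ : ℝ) (n : ℕ) (hn : 1 ≤ n) (h1 : 0.31 ≤ Λ) (h2 : Λ ≤ 0.36) :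
    5/(27*Λ)*(81/100)^n
      ≤ ∫ t in (0:ℝ)..Real.arctan (1/Λ), (Real.cos t)^n*(1-Λ*Real.tan t)^n := by
  obtain ⟨s1, s2, s3, s4⟩ := SC045
  obtain ⟨c1, c2, c3, c4⟩ := SC117
  apply leaf_main Λ n 0.31 0.36 0.45 1.17 0.7438 h1 h2 (by norm_num) (by norm_num)
    (by norm_num) (by norm_num) (by norm_num) (by linarith) (by nlinarith)
    (by linarith) (by nlinarith)
  rcases le_or_gt n 7 with hn7 | hn7
  · interval_cases n <;> norm_num [Finset.sum_range_succ]
  · have hseq := seq8_le n hn7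
    have h9 : (∑ k ∈ Finset.range 9, (0.7438:ℝ)^k) ≤ ∑ k ∈ Finset.range (n+1), (0.7438:ℝ)^k :=
      Finset.sum_le_sum_of_subset_of_nonneg (Finset.range_subset_range.mpr (by omega))
        (fun i _ _ => by positivity)
    have hpn : (0:ℝ) ≤ (0.7438:ℝ)^n := by positivity
    have h10 : (5:ℝ)/27*1.6678 ≤ 0.31*(0.45*∑ k ∈ Finset.range 9, (0.7438:ℝ)^k) := by
      norm_num [Finset.sum_range_succ]
    nlinarith [h9, hpn]

lemma int4 (Λ : ℝ) (n : ℕ) (hn : 1 ≤ n) (h1 : 0.36 ≤ Λ) (h2 : Λ ≤ 0.6) :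
    5/(27*Λ)*(81/100)^n
      ≤ ∫ t in (0:ℝ)..Real.arctan (1/Λ), (Real.cos t)^n*(1-Λ*Real.tan t)^n := by
  obtain ⟨s1, s2, s3, s4⟩ := SC045
  obtain ⟨c1, c2, c3, c4⟩ := SC100
  apply leaf_main Λ n 0.36 0.6 0.45 1.0 0.6394 h1 h2 (by norm_num) (by norm_num)
    (by norm_num) (by norm_num) (by norm_num) (by linarith) (by nlinarith)
    (by linarith) (by nlinarith)
  rcases le_or_gt n 7 with hn7 | hn7
  · interval_cases n <;> norm_num [Finset.sum_range_succ]
  · have hseq := seq8_le n hn7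
    have h9 : (∑ k ∈ Finset.range 9, (0.6394:ℝ)^k) ≤ ∑ k ∈ Finset.range (n+1), (0.6394:ℝ)^k :=
      Finset.sum_le_sum_of_subset_of_nonneg (Finset.range_subset_range.mpr (by omega))
        (fun i _ _ => by positivity)
    have hpn : (0:ℝ) ≤ (0.6394:ℝ)^n := by positivity
    have h10 : (5:ℝ)/27*1.6678 ≤ 0.36*(0.45*∑ k ∈ Finset.range 9, (0.6394:ℝ)^k) := by
      norm_num [Finset.sum_range_succ]
    nlinarith [h9, hpn]

lemma int5 (Λ : ℝ) (n : ℕ) (hn : 1 ≤ n) (h1 : 0.6 ≤ Λ) (h2 : Λ ≤ 1.0) :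
    5/(27*Λ)*(81/100)^n
      ≤ ∫ t in (0:ℝ)..Real.arctan (1/Λ), (Real.cos t)^n*(1-Λ*Real.tan t)^n := by
  obtain ⟨s1, s2, s3, s4⟩ := SC045
  obtain ⟨c1, c2, c3, c4⟩ := SC077
  apply leaf_main Λ n 0.6 1.0 0.45 0.77 0.4654 h1 h2 (by norm_num) (by norm_num)
    (by norm_num) (by norm_num) (by norm_num) (by linarith) (by nlinarith)
    (by linarith) (by nlinarith)
  rcases le_or_gt n 7 with hn7 | hn7
  · interval_cases n <;> norm_num [Finset.sum_range_succ]
  · have hseq := seq8_le n hn7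
    have h9 : (∑ k ∈ Finset.range 9, (0.4654:ℝ)^k) ≤ ∑ k ∈ Finset.range (n+1), (0.4654:ℝ)^k :=
      Finset.sum_le_sum_of_subset_of_nonneg (Finset.range_subset_range.mpr (by omega))
        (fun i _ _ => by positivity)
    have hpn : (0:ℝ) ≤ (0.4654:ℝ)^n := by positivity
    have h10 : (5:ℝ)/27*1.6678 ≤ 0.6*(0.45*∑ k ∈ Finset.range 9, (0.4654:ℝ)^k) := by
      norm_num [Finset.sum_range_succ]
    nlinarith [h9, hpn]

theorem stmt_5 (Λ : ℝ) (hΛ : 1 / 4 ≤ Λ) (n : ℕ) (hn : 1 ≤ n) :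
    (5 / (27 * Λ)) * (9 / 10 : ℝ) ^ (2 * n) ≤
      ∫ t in (0 : ℝ)..(Real.arctan (1 / Λ)),
        (Real.cos t) ^ n * (1 - Λ * Real.tan t) ^ n := by
  have hq : (9/10:ℝ)^(2*n) = (81/100)^n := by
    rw [pow_mul]; norm_num
  rw [hq]
  rcases le_or_gt 1 Λ with hb | hb
  · exact int_big Λ n hb
  rcases le_or_gt Λ 0.28 with h1 | h1
  · exact int1 Λ n hn (by norm_num at hΛ ⊢; linarith) h1
  rcases le_or_gt Λ 0.31 with h2 | h2
  · exact int2 Λ n hn h1.le h2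
  rcases le_or_gt Λ 0.36 with h3 | h3
  · exact int3 Λ n hn h2.le h3
  rcases le_or_gt Λ 0.6 with h4 | h4
  · exact int4 Λ n hn h3.le h4
  · exact int5 Λ n hn h4.le (hb.le.trans_eq (by norm_num))
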